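/- Let W be a finite Weyl group with coroot lattice R^∨. For every w ∈ W, the ℤ-rank of the mod-set Mod(w) = (w − Id)R^∨ equals the reflection length ℓ_R(w) of w. -/

import Mathlib

open scoped RealInnerProductSpace

abbrev V (n : ℕ) : Type := EuclideanSpace ℝ (Fin n)

/-- `g` is the (orthogonal) reflection corresponding to the root `β`. -/
def IsReflAlong {n : ℕ} (β : V n) (g : V n ≃ₗ[ℝ] V n) : Prop :=
  ∀ v, g v = v - (2 * ⟪v, β⟫ / ⟪β, β⟫) • β

/-- `Φ` is a finite crystallographic root system spanning `ℝⁿ`. -/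
structure IsCrystalRootSystem {n : ℕ} (Φ : Set (V n)) : Prop where
  finite : Φ.Finite
  ne_zero : ∀ β ∈ Φ, β ≠ 0
  spans : Submodule.span ℝ Φ = ⊤
  refl_mem : ∀ α ∈ Φ, ∀ β ∈ Φ, β - (2 * ⟪β, α⟫ / ⟪α, α⟫) • α ∈ Φ
  crystal : ∀ α ∈ Φ, ∀ β ∈ Φ, ∃ z : ℤ, (2 * ⟪β, α⟫ / ⟪α, α⟫) = (z : ℝ)

/-- The reflection length of `w`: the least `k` such that `w` is a product of `k`
reflections of the root system `Φ`. -/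
noncomputable def reflLen {n : ℕ} (Φ : Set (V n)) (w : V n ≃ₗ[ℝ] V n) : ℕ :=
  sInf {k | ∃ l : List (V n ≃ₗ[ℝ] V n), l.length = k ∧
    (∀ g ∈ l, ∃ β ∈ Φ, IsReflAlong β g) ∧ l.prod = w}

/-- The Weyl group of `Φ`: the group generated by the reflections of `Φ`. -/
noncomputable def weylGroup {n : ℕ} (Φ : Set (V n)) : Subgroup (V n ≃ₗ[ℝ] V n) :=
  Subgroup.closure {g | ∃ β ∈ Φ, IsReflAlong β g}

/-- The coroot `β^∨ = 2β/(β,β)` of a root `β`. -/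
noncomputable def coroot {n : ℕ} (β : V n) : V n := (2 / ⟪β, β⟫) • β

/-- The coroot lattice: the `ℤ`-span of the coroots. -/
noncomputable def corootLattice {n : ℕ} (Φ : Set (V n)) : Submodule ℤ (V n) :=
  Submodule.span ℤ (coroot '' Φ)

/-- The move-set `Mov(w) = Im(w - Id)`. -/
noncomputable def movSet {n : ℕ} (w : V n ≃ₗ[ℝ] V n) : Submodule ℝ (V n) :=
  LinearMap.range (w.toLinearMap - LinearMap.id)

/-- The mod-set `Mod(w) = (w - Id)R^∨`. -/
noncomputable def modSet {n : ℕ} (Φ : Set (V n)) (w : V n ≃ₗ[ℝ] V n) : Submodule ℤ (V n) :=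
  Submodule.map ((w.toLinearMap - LinearMap.id).restrictScalars ℤ) (corootLattice Φ)

namespace Carter

variable {n : ℕ}

/-- The reflection along `β` as a plain function. -/
noncomputable def sFun (β : V n) (v : V n) : V n := v - (2 * ⟪v, β⟫ / ⟪β, β⟫) • β

lemma sFun_add (β u v : V n) : sFun β (u + v) = sFun β u + sFun β v := by
  simp only [sFun, inner_add_left]
  generalize ⟪u, β⟫ = p; generalize ⟪v, β⟫ = q; generalize ⟪β, β⟫ = b
  match_scalars <;> ring

lemma sFun_smul (β : V n) (c : ℝ) (v : V n) : sFun β (c • v) = c • sFun β v := by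
  simp only [sFun, real_inner_smul_left]
  generalize ⟪v, β⟫ = p; generalize ⟪β, β⟫ = b
  match_scalars <;> ring

lemma sFun_invol (β : V n) (v : V n) : sFun β (sFun β v) = v := by
  rcases eq_or_ne β 0 with h | h
  · simp [sFun, h]
  · have hb : ⟪β, β⟫ ≠ 0 := inner_self_ne_zero.mpr h
    simp only [sFun, inner_sub_left, real_inner_smul_left]
    generalize hp : ⟪v, β⟫ = p
    generalize hB : ⟪β, β⟫ = b at hb
    match_scalars
    · ring
    · field_simp; ring

/-- The reflection along `β` as a linear equivalence (the identity if `β = 0`). -/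
noncomputable def sE (β : V n) : V n ≃ₗ[ℝ] V n where
  toFun := sFun β
  invFun := sFun β
  map_add' := sFun_add β
  map_smul' := sFun_smul β
  left_inv := fun v => sFun_invol β v
  right_inv := fun v => sFun_invol β v

@[simp] lemma sE_apply (β v : V n) : sE β v = v - (2 * ⟪v, β⟫ / ⟪β, β⟫) • β := rfl

lemma isReflAlong_sE (β : V n) : IsReflAlong β (sE β) := fun _ => rfl

lemma eq_sE' {β : V n} {g : V n ≃ₗ[ℝ] V n} (h : IsReflAlong β g) : g = sE β :=
  LinearEquiv.ext fun v => h v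

lemma sE_invol (β : V n) (v : V n) : sE β (sE β v) = v := sFun_invol β v

lemma sE_mul_self (β : V n) : sE β * sE β = 1 :=
  LinearEquiv.ext fun v => sE_invol β v

lemma sE_inv (β : V n) : (sE β)⁻¹ = sE β := by
  rw [eq_comm, eq_inv_iff_mul_eq_one, sE_mul_self]

lemma sE_apply_self {β : V n} (hβ : β ≠ 0) : sE β β = -β := by
  have h : ⟪β, β⟫ ≠ 0 := inner_self_ne_zero.mpr hβ
  simp only [sE_apply]
  rw [mul_div_assoc, div_self h, mul_one, two_smul]; abel

lemma sE_smul {β : V n} {c : ℝ} (hc : c ≠ 0) : sE (c • β) = sE β := by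
  refine LinearEquiv.ext fun v => ?_
  rcases eq_or_ne β 0 with h | h
  · simp [h]
  · have hb : ⟪β, β⟫ ≠ 0 := inner_self_ne_zero.mpr h
    simp only [sE_apply, real_inner_smul_left, real_inner_smul_right]
    generalize hp : ⟪v, β⟫ = p
    generalize hB : ⟪β, β⟫ = b at hb
    match_scalars
    · ring
    · field_simp

lemma sE_neg (β : V n) : sE (-β) = sE β := by
  rcases eq_or_ne β 0 with h | h
  · simp [h]
  · have := sE_smul (β := β) (c := (-1:ℝ)) (by norm_num)
    simpa using this

/-- orthogonality of a linear automorphism. -/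
def Orth (g : V n ≃ₗ[ℝ] V n) : Prop := ∀ u v : V n, ⟪g u, g v⟫ = ⟪u, v⟫

lemma orth_one : Orth (1 : V n ≃ₗ[ℝ] V n) := fun _ _ => rfl

lemma Orth.mul {g h : V n ≃ₗ[ℝ] V n} (hg : Orth g) (hh : Orth h) : Orth (g * h) :=
  fun u v => by rw [show (g*h) u = g (h u) from rfl, show (g*h) v = g (h v) from rfl, hg, hh]

lemma Orth.inv {g : V n ≃ₗ[ℝ] V n} (hg : Orth g) : Orth g⁻¹ := fun u v => by
  rw [← hg (g⁻¹ u) (g⁻¹ v), show g (g⁻¹ u) = u from g.apply_symm_apply u,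
    show g (g⁻¹ v) = v from g.apply_symm_apply v]

lemma orth_sE (β : V n) : Orth (sE β) := by
  intro u v
  rcases eq_or_ne β 0 with h | h
  · simp [h]
  · have hb : ⟪β, β⟫ ≠ 0 := inner_self_ne_zero.mpr h
    simp only [sE_apply, inner_sub_left, inner_sub_right, real_inner_smul_left,
      real_inner_smul_right]
    have h1 : ⟪β, v⟫ = ⟪v, β⟫ := real_inner_comm v β
    rw [h1]
    generalize hp : ⟪v, β⟫ = p
    generalize hq : ⟪u, β⟫ = q
    generalize hB : ⟪β, β⟫ = b at hb
    field_simp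
    ring


variable {Φ : Set (V n)}

lemma orth_of_mem_weyl {w : V n ≃ₗ[ℝ] V n} (hw : w ∈ weylGroup Φ) : Orth w := by
  induction hw using Subgroup.closure_induction with
  | mem g hg => obtain ⟨β, _, hr⟩ := hg; rw [eq_sE' hr]; exact orth_sE β
  | one => exact orth_one
  | mul x y hx hy ihx ihy => exact ihx.mul ihy
  | inv x hx ih => exact ih.inv

lemma mul_apply (g h : V n ≃ₗ[ℝ] V n) (v : V n) : (g * h) v = g (h v) := rfl

lemma sE_root_mem (hΦ : IsCrystalRootSystem Φ) {β r : V n} (hβ : β ∈ Φ) (hr : r ∈ Φ) :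
    sE β r ∈ Φ := by
  rw [sE_apply]; exact hΦ.refl_mem β hβ r hr

lemma weyl_maps_root (hΦ : IsCrystalRootSystem Φ) {w : V n ≃ₗ[ℝ] V n} (hw : w ∈ weylGroup Φ) :
    ∀ r ∈ Φ, w r ∈ Φ := by
  have key : ∀ g : V n ≃ₗ[ℝ] V n, (∀ r ∈ Φ, g r ∈ Φ) → ∀ r ∈ Φ, g⁻¹ r ∈ Φ := by
    intro g hg
    have himg : g '' Φ = Φ := by
      apply Set.eq_of_subset_of_ncard_le
      · rintro _ ⟨r, hr, rfl⟩; exact hg r hr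
      · rw [Set.ncard_image_of_injective _ g.injective]
      · exact hΦ.finite
    intro r hr
    rw [← himg] at hr
    obtain ⟨s, hs, rfl⟩ := hr
    rw [show g⁻¹ (g s) = s from g.symm_apply_apply s]
    exact hs
  induction hw using Subgroup.closure_induction with
  | mem g hg =>
    obtain ⟨β, hβ, hrefl⟩ := hg
    intro r hr
    rw [eq_sE' hrefl]
    exact sE_root_mem hΦ hβ hr
  | one => intro r hr; exact hr
  | mul x y hx hy ihx ihy => intro r hr; exact ihx _ (ihy r hr)
  | inv x hx ih => exact key x ih

lemma conj_sE {g : V n ≃ₗ[ℝ] V n} (hg : Orth g) (β : V n) :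
    g * sE β * g⁻¹ = sE (g β) := by
  refine LinearEquiv.ext fun v => ?_
  have h1 : ⟪g⁻¹ v, β⟫ = ⟪v, g β⟫ := by
    conv_rhs => rw [show v = g (g⁻¹ v) from (g.apply_symm_apply v).symm]
    rw [hg]
  calc (g * sE β * g⁻¹) v = g (sE β (g⁻¹ v)) := rfl
    _ = g (g⁻¹ v - (2 * ⟪g⁻¹ v, β⟫ / ⟪β, β⟫) • β) := by rw [sE_apply]
    _ = v - (2 * ⟪v, g β⟫ / ⟪g β, g β⟫) • (g β) := by
        rw [map_sub, map_smul, show (g : V n ≃ₗ[ℝ] V n) (g⁻¹ v) = v from g.apply_symm_apply v,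
          h1, hg]
    _ = sE (g β) v := (sE_apply _ v).symm

/-- The fixed subspace of `g`. -/
noncomputable def fixSub (g : V n ≃ₗ[ℝ] V n) : Submodule ℝ (V n) :=
  LinearMap.ker (g.toLinearMap - LinearMap.id)

lemma mem_fixSub {g : V n ≃ₗ[ℝ] V n} {v : V n} : v ∈ fixSub g ↔ g v = v := by
  simp [fixSub, LinearMap.mem_ker, sub_eq_zero]

lemma mem_movSet_iff {g : V n ≃ₗ[ℝ] V n} {v : V n} :
    v ∈ movSet g ↔ ∃ u, g u - u = v := by
  simp [movSet, LinearMap.mem_range]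

lemma finrank_movSet_add_fixSub (g : V n ≃ₗ[ℝ] V n) :
    Module.finrank ℝ (movSet g) + Module.finrank ℝ (fixSub g) = n := by
  have := LinearMap.finrank_range_add_finrank_ker (g.toLinearMap - LinearMap.id)
  rwa [finrank_euclideanSpace, Fintype.card_fin] at this

lemma movSet_orthogonal {w : V n ≃ₗ[ℝ] V n} (hw : Orth w) : movSet w = (fixSub w)ᗮ := by
  have hle : movSet w ≤ (fixSub w)ᗮ := by
    rintro _ ⟨u, rfl⟩
    rw [Submodule.mem_orthogonal]
    intro v hv
    rw [mem_fixSub] at hv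
    have : ⟪v, w u⟫ = ⟪v, u⟫ := by conv_lhs => rw [← hv, hw]
    simp only [LinearMap.sub_apply, LinearMap.id_apply, LinearEquiv.coe_coe, inner_sub_right, this,
      sub_self]
  refine Submodule.eq_of_le_of_finrank_eq hle ?_
  have h1 := finrank_movSet_add_fixSub w
  have h2 := Submodule.finrank_add_finrank_orthogonal (K := fixSub w)
  rw [finrank_euclideanSpace, Fintype.card_fin] at h2
  omega

lemma movSet_eq_bot_iff {w : V n ≃ₗ[ℝ] V n} : movSet w = ⊥ ↔ w = 1 := by
  constructor
  · intro h
    refine LinearEquiv.ext fun v => ?_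
    have : w v - v ∈ movSet w := ⟨v, rfl⟩
    rw [h, Submodule.mem_bot, sub_eq_zero] at this
    simpa using this
  · rintro rfl
    rw [Submodule.eq_bot_iff]
    rintro v ⟨u, rfl⟩
    simp

lemma movSet_mul_le (g h : V n ≃ₗ[ℝ] V n) :
    movSet (g * h) ≤ Submodule.map (g : V n →ₗ[ℝ] V n) (movSet h) ⊔ movSet g := by
  rintro _ ⟨u, rfl⟩
  have hkey : (g * h) u - u = g (h u - u) + (g u - u) := by
    rw [mul_apply, map_sub]; abel
  simp only [LinearMap.sub_apply, LinearMap.id_apply, LinearEquiv.coe_coe]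
  rw [show ((g * h) : V n ≃ₗ[ℝ] V n) u - u = g (h u - u) + (g u - u) from hkey]
  refine Submodule.add_mem _ ?_ ?_
  · exact Submodule.mem_sup_left ⟨h u - u, ⟨u, rfl⟩, rfl⟩
  · exact Submodule.mem_sup_right ⟨u, rfl⟩

lemma movSet_sE_le (β : V n) : movSet (sE β) ≤ Submodule.span ℝ {β} := by
  rintro _ ⟨u, rfl⟩
  simp only [LinearMap.sub_apply, LinearMap.id_apply, LinearEquiv.coe_coe, sE_apply]
  rw [show u - (2 * ⟪u, β⟫ / ⟪β, β⟫) • β - u = (-(2 * ⟪u, β⟫ / ⟪β, β⟫)) • β by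
    rw [neg_smul]; abel]
  exact Submodule.smul_mem _ _ (Submodule.mem_span_singleton_self β)

lemma finrank_movSet_le_length (hΦ : IsCrystalRootSystem Φ) :
    ∀ l : List (V n ≃ₗ[ℝ] V n), (∀ g ∈ l, ∃ β ∈ Φ, IsReflAlong β g) →
    Module.finrank ℝ (movSet l.prod) ≤ l.length := by
  intro l
  induction l with
  | nil =>
    intro _
    simp only [List.prod_nil, List.length_nil, Nat.le_zero]
    exact Submodule.finrank_eq_zero.mpr (movSet_eq_bot_iff.mpr rfl)
  | cons g t ih =>
    intro hl
    obtain ⟨β, hβ, hrefl⟩ := hl g List.mem_cons_self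
    have ht := ih (fun g' hg' => hl g' (List.mem_cons_of_mem _ hg'))
    rw [List.prod_cons]
    have h1 := Submodule.finrank_mono (movSet_mul_le g t.prod)
    have h2 := Submodule.finrank_sup_add_finrank_inf_eq
      (Submodule.map (g : V n →ₗ[ℝ] V n) (movSet t.prod)) (movSet g)
    have h3 : Module.finrank ℝ (Submodule.map (g : V n →ₗ[ℝ] V n) (movSet t.prod))
        ≤ t.length := le_trans (Submodule.finrank_map_le _ _) ht
    have h4 : Module.finrank ℝ (movSet g) ≤ 1 := by
      rw [eq_sE' hrefl]
      have hsp : Module.finrank ℝ (Submodule.span ℝ ({β} : Set (V n))) ≤ 1 := by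
        rcases eq_or_ne β 0 with h0 | h0
        · subst h0
          rw [Submodule.span_zero_singleton]
          simp [finrank_bot]
        · exact le_of_eq (finrank_span_singleton h0)
      exact le_trans (Submodule.finrank_mono (movSet_sE_le β)) hsp
    simp only [List.length_cons]
    omega

lemma dim_drop {w : V n ≃ₗ[ℝ] V n} {β : V n} (hβ : β ≠ 0) (hw : Orth w)
    (hmem : β ∈ movSet w) :
    Module.finrank ℝ (movSet (sE β * w)) + 1 = Module.finrank ℝ (movSet w) := by
  have hbb : ⟪β, β⟫ ≠ 0 := inner_self_ne_zero.mpr hβ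
  set A := fixSub w with hA
  set B := fixSub (sE β * w) with hB
  -- A ≤ B
  have hAB : A ≤ B := by
    intro v hv
    have hv' := mem_fixSub.mp hv
    have hvβ : ⟪v, β⟫ = 0 := by
      have := (movSet_orthogonal hw) ▸ hmem
      exact (Submodule.mem_orthogonal _ _).mp this v hv
    rw [mem_fixSub, mul_apply, hv', sE_apply, hvβ]
    simp
  -- the new fixed vector
  obtain ⟨u, hu⟩ : ∃ u, w u - u = β := by
    obtain ⟨u, hu⟩ := hmem; exact ⟨u, hu⟩
  have huw : w u = u + β := by rw [← hu]; abel
  have huβ : ⟪u, β⟫ = -(⟪β, β⟫ / 2) := by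
    have e1 : ⟪β, β⟫ = ⟪w u - u, w u - u⟫ := by rw [hu]
    have e2 : ⟪w u, w u⟫ = ⟪u, u⟫ := hw u u
    have e3 : ⟪u, w u⟫ = ⟪w u, u⟫ := real_inner_comm (w u) u
    have e4 : ⟪u, β⟫ = ⟪u, w u⟫ - ⟪u, u⟫ := by rw [← hu, inner_sub_right]
    rw [inner_sub_left, inner_sub_right, inner_sub_right, e2, e3] at e1
    linarith
  have huB : u ∈ B := by
    rw [mem_fixSub, mul_apply, huw, sE_apply, inner_add_left, huβ]
    rw [show 2 * (-(⟪β, β⟫ / 2) + ⟪β, β⟫) / ⟪β, β⟫ = ⟪β, β⟫ / ⟪β, β⟫ by ring, div_self hbb]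
    simp
  have huA : u ∉ A := by
    rw [mem_fixSub]
    intro h
    rw [h] at huw
    have : β = 0 := by
      have := huw.symm
      rwa [add_eq_left] at this
    exact hβ this
  have hlt : A < B := lt_of_le_of_ne hAB (fun h => huA (h ▸ huB))
  have hAltB : Module.finrank ℝ A < Module.finrank ℝ B :=
    Submodule.finrank_lt_finrank_of_lt hlt
  -- B ≤ A + 1
  have hBA : Module.finrank ℝ B ≤ Module.finrank ℝ A + 1 := by
    set f : V n →ₗ[ℝ] ℝ := ((innerSL ℝ β).toLinearMap : V n →ₗ[ℝ] ℝ) with hf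
    set g : ↥B →ₗ[ℝ] ℝ := f.comp B.subtype with hg
    have hrn := LinearMap.finrank_range_add_finrank_ker g
    have hr1 : Module.finrank ℝ (LinearMap.range g) ≤ 1 := by
      have := Submodule.finrank_le (LinearMap.range g)
      simpa using this
    have hker : Module.finrank ℝ (LinearMap.ker g) ≤ Module.finrank ℝ A := by
      have hmemA : ∀ v : ↥(LinearMap.ker g),
          (B.subtype.comp (LinearMap.ker g).subtype) v ∈ A := by
        intro v
        have hvB : ((v : ↥B) : V n) ∈ B := (v : ↥B).2
        have hvg : ⟪β, ((v : ↥B) : V n)⟫ = 0 := by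
          have h := LinearMap.mem_ker.mp v.2
          simpa only [hg, hf, LinearMap.comp_apply, Submodule.coe_subtype,
            ContinuousLinearMap.coe_coe, innerSL_apply_apply] using h
        have hvg' : ⟪((v : ↥B) : V n), β⟫ = 0 := by rw [real_inner_comm]; exact hvg
        have hfix : w (((v : ↥B) : V n)) = ((v : ↥B) : V n) := by
          have hB' := mem_fixSub.mp hvB
          rw [mul_apply] at hB'
          have heq : w (((v : ↥B) : V n)) = sE β (((v : ↥B) : V n)) := by
            conv_rhs => rw [← hB', sE_invol]
          rw [heq, sE_apply, hvg']
          simp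
        exact mem_fixSub.mpr hfix
      let j : ↥(LinearMap.ker g) →ₗ[ℝ] ↥A :=
        LinearMap.codRestrict A (B.subtype.comp (LinearMap.ker g).subtype) hmemA
      have hinj : Function.Injective j := by
        intro a b hab
        have h2 : (j a : V n) = (j b : V n) := congrArg Subtype.val hab
        have h3 : ((a : ↥B) : V n) = ((b : ↥B) : V n) := h2
        exact Subtype.ext (Subtype.ext h3)
      exact LinearMap.finrank_le_finrank_of_injective hinj
    omega
  have h1 := finrank_movSet_add_fixSub w
  have h2 := finrank_movSet_add_fixSub (sE β * w)
  rw [← hA] at h1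
  rw [← hB] at h2
  omega


lemma ipos {α : V n} (hα : α ≠ 0) : 0 < ⟪α, α⟫ :=
  lt_of_le_of_ne real_inner_self_nonneg (Ne.symm (inner_self_ne_zero.mpr hα))

lemma root_neg_mem (hΦ : IsCrystalRootSystem Φ) {α : V n} (hα : α ∈ Φ) : -α ∈ Φ := by
  have h := hΦ.refl_mem α hα α hα
  have hne : ⟪α, α⟫ ≠ 0 := inner_self_ne_zero.mpr (hΦ.ne_zero α hα)
  rw [mul_div_assoc, div_self hne, mul_one, two_smul] at h
  rw [show α - (α + α) = -α by abel] at h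
  exact h

lemma crystal_sub_mem (hΦ : IsCrystalRootSystem Φ) {α β : V n} (hα : α ∈ Φ) (hβ : β ∈ Φ)
    (hpos : 0 < ⟪α, β⟫) (hne : α ≠ β) : α - β ∈ Φ := by
  obtain ⟨z1, hz1⟩ := hΦ.crystal β hβ α hα   -- 2⟪α,β⟫/⟪β,β⟫ = z1
  obtain ⟨z2, hz2⟩ := hΦ.crystal α hα β hβ   -- 2⟪β,α⟫/⟪α,α⟫ = z2
  have haa : 0 < ⟪α, α⟫ := ipos (hΦ.ne_zero α hα)
  have hbb : 0 < ⟪β, β⟫ := ipos (hΦ.ne_zero β hβ)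
  have hba : ⟪β, α⟫ = ⟪α, β⟫ := real_inner_comm α β
  have hz1pos : (0 : ℝ) < z1 := by rw [← hz1]; positivity
  have hz2pos : (0 : ℝ) < z2 := by rw [← hz2, hba]; positivity
  have hz1' : 1 ≤ z1 := by exact_mod_cast hz1pos
  have hz2' : 1 ≤ z2 := by exact_mod_cast hz2pos
  rcases eq_or_lt_of_le hz1' with h1 | h1
  · -- z1 = 1 : α - β = sE β α ∈ Φ
    have := hΦ.refl_mem β hβ α hα
    rw [hz1, ← h1] at this
    simpa using this
  rcases eq_or_lt_of_le hz2' with h2 | h2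
  · have := hΦ.refl_mem α hα β hβ
    rw [hz2, ← h2] at this
    simp only [Int.cast_one, one_smul] at this
    have := root_neg_mem hΦ this
    rw [neg_sub] at this
    exact this
  · -- z1 ≥ 2 and z2 ≥ 2 : contradiction
    exfalso
    have hz1R : (2 : ℝ) ≤ z1 := by exact_mod_cast h1
    have hz2R : (2 : ℝ) ≤ z2 := by exact_mod_cast h2
    rw [div_eq_iff hbb.ne'] at hz1
    rw [div_eq_iff haa.ne'] at hz2
    have hab_bb : ⟪β, β⟫ ≤ ⟪α, β⟫ := by
      nlinarith [mul_nonneg (by linarith : (0:ℝ) ≤ (z1 : ℝ) - 2) hbb.le]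
    have hab_aa : ⟪α, α⟫ ≤ ⟪α, β⟫ := by
      nlinarith [mul_nonneg (by linarith : (0:ℝ) ≤ (z2 : ℝ) - 2) haa.le]
    have hsub : ⟪α - β, α - β⟫ ≤ 0 := by
      rw [inner_sub_left, inner_sub_right, inner_sub_right, hba]
      linarith
    exact hne (by rwa [real_inner_self_nonpos, sub_eq_zero] at hsub)


/-- ℚ-linearly independent families of rational vectors stay independent over ℝ. -/
lemma rat_indep_real {ι κ : Type*} [Fintype ι] [Fintype κ] [DecidableEq ι] [DecidableEq κ]
    (B : ι → κ → ℚ) (h : LinearIndependent ℚ B) :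
    LinearIndependent ℝ (fun i => fun k => ((B i k : ℝ))) := by
  classical
  set M : Matrix κ ι ℚ := fun k i => B i k with hM
  have hinj : Function.Injective (Matrix.toLin' M) := by
    rw [← LinearMap.ker_eq_bot]
    rw [LinearMap.ker_eq_bot']
    intro z hz
    have hz' : ∀ k, ∑ i, z i * B i k = 0 := by
      intro k
      have := congrFun hz k
      simpa [Matrix.toLin'_apply, Matrix.mulVec, dotProduct, (fun _ _ => rfl : ∀ k i, M k i = B i k), mul_comm] using this
    have : ∀ i, z i = 0 := by
      rw [Fintype.linearIndependent_iff] at h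
      apply h
      funext k
      simp only [Finset.sum_apply, Pi.smul_apply, smul_eq_mul, Pi.zero_apply]
      exact hz' k
    funext i; exact this i
  obtain ⟨g, hg⟩ := LinearMap.exists_leftInverse_of_injective _ (LinearMap.ker_eq_bot.mpr hinj)
  set N : Matrix ι κ ℚ := LinearMap.toMatrix' g with hN
  have hNM : N * M = 1 := by
    have h2 : LinearMap.toMatrix' (g ∘ₗ Matrix.toLin' M) = (1 : Matrix ι ι ℚ) := by
      rw [hg, LinearMap.toMatrix'_id]
    rw [LinearMap.toMatrix'_comp, LinearMap.toMatrix'_toLin'] at h2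
    exact h2
  set M' : Matrix κ ι ℝ := M.map (⇑(Rat.castHom ℝ)) with hM'
  set N' : Matrix ι κ ℝ := N.map (⇑(Rat.castHom ℝ)) with hN'
  have hNM' : N' * M' = 1 := by
    have h2 : (N * M).map (⇑(Rat.castHom ℝ)) = N.map (⇑(Rat.castHom ℝ)) * M.map (⇑(Rat.castHom ℝ)) :=
      Matrix.map_mul
    rw [hNM] at h2
    have h1 : (1 : Matrix ι ι ℚ).map (⇑(Rat.castHom ℝ)) = (1 : Matrix ι ι ℝ) := by
      ext i j
      by_cases hij : i = j <;> simp [Matrix.one_apply, hij]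
    rw [h1] at h2
    rw [hM', hN', ← h2]
  rw [Fintype.linearIndependent_iff]
  intro lam hlam i
  have hMl : M'.mulVec lam = 0 := by
    funext k
    have := congrFun hlam k
    simpa [Matrix.mulVec, dotProduct, hM', (fun _ _ => rfl : ∀ k i, M k i = B i k), Matrix.map_apply, mul_comm] using this
  have := congrArg (N'.mulVec) hMl
  rw [Matrix.mulVec_mulVec, hNM'] at this
  have hl : lam = 0 := by
    simpa [Matrix.one_mulVec, Matrix.mulVec_zero] using this
  exact congrFun hl i

/-- ℤ-linearly independent families of integer vectors are ℚ-independent. -/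
lemma int_indep_rat {ι κ : Type*} [Fintype ι] [Fintype κ]
    (A : ι → κ → ℤ) (h : LinearIndependent ℤ A) :
    LinearIndependent ℚ (fun i => fun k => ((A i k : ℚ))) := by
  classical
  rw [Fintype.linearIndependent_iff]
  intro q hq i
  set d : ℤ := ∏ j, (q j).den with hd
  have hdpos : 0 < d := Finset.prod_pos (fun j _ => by exact_mod_cast (q j).pos)
  set z : ι → ℤ := fun j => (q j).num * (∏ j' ∈ Finset.univ.erase j, ((q j').den : ℤ)) with hz
  have hzq : ∀ j, (z j : ℚ) = q j * (d : ℚ) := by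
    intro j
    rw [hz, hd]
    push_cast
    have : ((∏ j', ((q j').den : ℚ))) = ((q j).den : ℚ) * ∏ j' ∈ Finset.univ.erase j, ((q j').den : ℚ) := by
      rw [← Finset.mul_prod_erase Finset.univ _ (Finset.mem_univ j)]
    rw [this]
    rw [show (q j : ℚ) * (((q j).den : ℚ) * ∏ j' ∈ Finset.univ.erase j, ((q j').den : ℚ))
        = ((q j : ℚ) * ((q j).den : ℚ)) * ∏ j' ∈ Finset.univ.erase j, ((q j').den : ℚ) by ring]
    congr 1
    rw [Rat.mul_den_eq_num]
  have hsum : ∑ j, z j • A j = 0 := by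
    funext k
    simp only [Finset.sum_apply, Pi.smul_apply, smul_eq_mul, Pi.zero_apply]
    have hcast : ((∑ j, z j * A j k : ℤ) : ℚ) = 0 := by
      push_cast
      rw [show ∑ j, (z j : ℚ) * (A j k : ℚ) = ∑ j, (q j * (d:ℚ)) * (A j k : ℚ) by
        apply Finset.sum_congr rfl; intro j _; rw [hzq j]]
      rw [show ∑ j, (q j * (d:ℚ)) * (A j k : ℚ) = (d:ℚ) * ∑ j, q j * (A j k : ℚ) by
        rw [Finset.mul_sum]; apply Finset.sum_congr rfl; intro j _; ring]
      have := congrFun hq k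
      simp only [Finset.sum_apply, Pi.smul_apply, smul_eq_mul, Pi.zero_apply] at this
      rw [this, mul_zero]
    exact_mod_cast hcast
  have hz0 : ∀ j, z j = 0 := by
    rw [Fintype.linearIndependent_iff] at h
    exact h z hsum
  have := hzq i
  rw [hz0 i] at this
  have hd0 : (d : ℚ) ≠ 0 := by
    exact_mod_cast hdpos.ne'
  have : q i * (d : ℚ) = 0 := by rw [← this]; simp
  rcases mul_eq_zero.mp this with h' | h'
  · exact h'
  · exact absurd h' hd0


lemma span_coroots_top (hΦ : IsCrystalRootSystem Φ) :
    Submodule.span ℝ (coroot '' Φ) = ⊤ := by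
  rw [eq_top_iff, ← hΦ.spans, Submodule.span_le]
  intro r hr
  have hrr : 0 < ⟪r, r⟫ := ipos (hΦ.ne_zero r hr)
  have : r = (⟪r, r⟫ / 2) • coroot r := by
    rw [coroot, smul_smul]
    rw [show ⟪r, r⟫ / 2 * (2 / ⟪r, r⟫) = (⟪r, r⟫ / ⟪r, r⟫) * (2/2) by ring]
    rw [div_self hrr.ne', div_self (two_ne_zero)]
    simp
  rw [this]
  exact Submodule.smul_mem _ _ (Submodule.subset_span ⟨r, hr, rfl⟩)

lemma weyl_coroot_map {w : V n ≃ₗ[ℝ] V n} (hw : Orth w) (β : V n) :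
    w (coroot β) = coroot (w β) := by
  rw [coroot, coroot, map_smul, hw]

lemma weyl_stab_L (hΦ : IsCrystalRootSystem Φ) {w : V n ≃ₗ[ℝ] V n} (hw : w ∈ weylGroup Φ)
    {v : V n} (hv : v ∈ corootLattice Φ) : w v ∈ corootLattice Φ := by
  induction hv using Submodule.span_induction with
  | mem u hu =>
    obtain ⟨r, hr, rfl⟩ := hu
    rw [weyl_coroot_map (orth_of_mem_weyl hw)]
    exact Submodule.subset_span ⟨w r, weyl_maps_root hΦ hw r hr, rfl⟩
  | zero => rw [map_zero]; exact Submodule.zero_mem _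
  | add u u' hu hu' ihu ihu' => rw [map_add]; exact Submodule.add_mem _ ihu ihu'
  | smul z u hu ihu => rw [map_zsmul]; exact Submodule.smul_mem _ z ihu

lemma L_int (hΦ : IsCrystalRootSystem Φ) {v : V n} (hv : v ∈ corootLattice Φ) :
    ∀ r ∈ Φ, ∃ z : ℤ, ⟪v, r⟫ = (z : ℝ) := by
  induction hv using Submodule.span_induction with
  | mem u hu =>
    obtain ⟨β, hβ, rfl⟩ := hu
    intro r hr
    obtain ⟨z, hz⟩ := hΦ.crystal β hβ r hr
    refine ⟨z, ?_⟩
    rw [coroot, real_inner_smul_left, ← hz, real_inner_comm β r]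
    ring
  | zero => intro r hr; exact ⟨0, by simp⟩
  | add u u' hu hu' ihu ihu' =>
    intro r hr
    obtain ⟨z1, hz1⟩ := ihu r hr
    obtain ⟨z2, hz2⟩ := ihu' r hr
    exact ⟨z1 + z2, by rw [inner_add_left, hz1, hz2]; push_cast; ring⟩
  | smul z u hu ihu =>
    intro r hr
    obtain ⟨z1, hz1⟩ := ihu r hr
    refine ⟨z * z1, ?_⟩
    rw [← Int.cast_smul_eq_zsmul ℝ z u, real_inner_smul_left, hz1]
    push_cast
    ring

lemma modSet_le_L (hΦ : IsCrystalRootSystem Φ) {w : V n ≃ₗ[ℝ] V n} (hw : w ∈ weylGroup Φ) :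
    modSet Φ w ≤ corootLattice Φ := by
  rintro _ ⟨v, hv, rfl⟩
  simp only [LinearMap.restrictScalars_apply, LinearMap.sub_apply, LinearMap.id_apply,
    LinearEquiv.coe_coe]
  exact Submodule.sub_mem _ (weyl_stab_L hΦ hw hv) hv

lemma modSet_le_movSet (w : V n ≃ₗ[ℝ] V n) (v : V n) (hv : v ∈ modSet Φ w) : v ∈ movSet w := by
  obtain ⟨u, hu, rfl⟩ := hv
  exact ⟨u, rfl⟩

lemma span_modSet (hΦ : IsCrystalRootSystem Φ) (w : V n ≃ₗ[ℝ] V n) :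
    Submodule.span ℝ ((modSet Φ w : Set (V n))) = movSet w := by
  apply le_antisymm
  · rw [Submodule.span_le]
    intro v hv
    exact modSet_le_movSet w v hv
  · have h1 : movSet w = Submodule.map (w.toLinearMap - LinearMap.id) ⊤ := by
      rw [Submodule.map_top]; rfl
    rw [h1, ← span_coroots_top hΦ, Submodule.map_span, Submodule.span_le]
    rintro _ ⟨_, ⟨r, hr, rfl⟩, rfl⟩
    apply Submodule.subset_span
    exact ⟨coroot r, Submodule.subset_span ⟨r, hr, rfl⟩, rfl⟩

theorem finrank_modSet_eq (hΦ : IsCrystalRootSystem Φ) {w : V n ≃ₗ[ℝ] V n}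
    (hw : w ∈ weylGroup Φ) :
    Module.finrank ℤ (modSet Φ w) = Module.finrank ℝ (movSet w) := by
  classical
  have hLfin : Module.Finite ℤ (corootLattice Φ) :=
    Module.Finite.span_of_finite ℤ (hΦ.finite.image coroot)
  have hMfin : Module.Finite ℤ (modSet Φ w) := Module.Finite.map (corootLattice Φ) _
  apply le_antisymm
  · -- finrank ℤ modSet ≤ finrank ℝ movSet
    have : Module.IsTorsionFree ℤ (V n) := Module.IsTorsionFree.of_smul_eq_zero fun r m h => by
      rw [← Int.cast_smul_eq_zsmul ℝ] at h; simpa using h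
    have hfree : Module.Free ℤ (modSet Φ w) := Module.free_of_finite_type_torsion_free'
    set ι := Module.Free.ChooseBasisIndex ℤ (modSet Φ w) with hι
    have hcard : Module.finrank ℤ (modSet Φ w) = Fintype.card ι :=
      Module.finrank_eq_card_chooseBasisIndex ℤ _
    set cb := Module.Free.chooseBasis ℤ (modSet Φ w) with hcb
    set vj : ι → V n := fun i => ((cb i : modSet Φ w) : V n) with hvj
    have hvjind : LinearIndependent ℤ vj := by
      have := cb.linearIndependent
      exact this.map' (modSet Φ w).subtype (Submodule.ker_subtype _)
    -- a basis of V inside Φ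
    obtain ⟨s, hsΦ, hsspan, hsind⟩ := exists_linearIndependent ℝ Φ
    have hsfin : s.Finite := hΦ.finite.subset hsΦ
    have : Fintype ↥s := hsfin.fintype
    have hstop : Submodule.span ℝ s = ⊤ := by rw [hsspan, hΦ.spans]
    have hker : ∀ v : V n, (∀ j : ↥s, ⟪v, (j : V n)⟫ = 0) → v = 0 := by
      intro v hv
      have hvmem : v ∈ (Submodule.span ℝ s)ᗮ := by
        rw [Submodule.mem_orthogonal]
        intro u hu
        induction hu using Submodule.span_induction with
        | mem y hy => rw [real_inner_comm]; exact hv ⟨y, hy⟩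
        | zero => simp
        | add a b ha hb iha ihb => rw [inner_add_left, iha, ihb]; ring
        | smul c a ha iha => rw [real_inner_smul_left, iha]; ring
      rw [hstop, Submodule.top_orthogonal_eq_bot] at hvmem
      simpa using hvmem
    -- integer matrix of inner products
    have hint : ∀ (i : ι) (j : ↥s), ∃ z : ℤ, ⟪vj i, (j : V n)⟫ = (z : ℝ) := by
      intro i j
      have hmem : vj i ∈ corootLattice Φ := modSet_le_L hΦ hw (cb i).2
      exact L_int hΦ hmem (j : V n) (hsΦ j.2)
    set A : ι → ↥s → ℤ := fun i j => Classical.choose (hint i j) with hA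
    have hAspec : ∀ i j, ((A i j : ℝ)) = ⟪vj i, (j : V n)⟫ :=
      fun i j => (Classical.choose_spec (hint i j)).symm
    have hAind : LinearIndependent ℤ A := by
      rw [Fintype.linearIndependent_iff]
      intro z hz
      have hu0 : ∑ i, z i • vj i = 0 := by
        apply hker
        intro j
        rw [sum_inner]
        have hterm : ∀ i, ⟪z i • vj i, (j : V n)⟫ = ((z i * A i j : ℤ) : ℝ) := by
          intro i
          rw [← Int.cast_smul_eq_zsmul ℝ (z i) (vj i), real_inner_smul_left, ← hAspec]
          push_cast
          ring
        rw [Finset.sum_congr rfl (fun i _ => hterm i), ← Int.cast_sum]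
        have hzj := congrFun hz j
        simp only [Finset.sum_apply, Pi.smul_apply, smul_eq_mul, Pi.zero_apply] at hzj
        rw [hzj]
        simp
      rw [Fintype.linearIndependent_iff] at hvjind
      exact hvjind z hu0
    -- real independence
    have hArind : LinearIndependent ℝ (fun i => fun j : ↥s => ((A i j : ℝ))) := by
      have h1 := int_indep_rat A hAind
      have h2 := rat_indep_real _ h1
      have h3 : (fun i => fun j : ↥s => ((A i j : ℝ)))
          = fun i => fun j : ↥s => (((A i j : ℚ) : ℝ)) := by
        funext i j
        push_cast
        rfl
      rw [h3]
      exact h2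
    have hvjrind : LinearIndependent ℝ vj := by
      rw [Fintype.linearIndependent_iff]
      intro lam hlam i
      rw [Fintype.linearIndependent_iff] at hArind
      apply hArind lam
      funext j
      simp only [Finset.sum_apply, Pi.smul_apply, smul_eq_mul, Pi.zero_apply]
      have : ⟪∑ i', lam i' • vj i', (j : V n)⟫ = 0 := by rw [hlam, inner_zero_left]
      rw [sum_inner] at this
      rw [← this]
      apply Finset.sum_congr rfl
      intro i' _
      rw [real_inner_smul_left, hAspec]
    -- conclude
    have hvjmov : ∀ i, vj i ∈ movSet w := fun i => modSet_le_movSet w _ (cb i).2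
    set vjM : ι → movSet w := fun i => ⟨vj i, hvjmov i⟩ with hvjM
    have hvjMind : LinearIndependent ℝ vjM := by
      apply LinearIndependent.of_comp (movSet w).subtype
      exact hvjrind
    rw [hcard]
    exact hvjMind.fintype_card_le_finrank
  · -- finrank ℝ movSet ≤ finrank ℤ modSet
    obtain ⟨b, hbsub, hbspan, hbind⟩ := exists_linearIndependent ℝ ((modSet Φ w : Set (V n)))
    rw [span_modSet hΦ w] at hbspan
    have hbfin : b.Finite := by
      have : Finite ↥b := hbind.finite
      exact b.toFinite
    have hbfty : Fintype ↥b := hbfin.fintype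
    have hcard2 : Module.finrank ℝ (movSet w) = b.toFinset.card := by
      rw [← hbspan]
      exact finrank_span_set_eq_card hbind
    have hZR : Function.Injective fun (r : ℤ) => r • (1 : ℝ) := by
      intro a b hab
      have : ((a : ℝ)) = (b : ℝ) := by
        simpa [zsmul_eq_mul] using hab
      exact_mod_cast this
    have hbindZ : LinearIndependent ℤ (Subtype.val : ↥b → V n) :=
      hbind.restrict_scalars hZR
    have hcind : LinearIndependent ℤ (fun y : ↥b => (⟨(y : V n), hbsub y.2⟩ : modSet Φ w)) := by
      apply LinearIndependent.of_comp (modSet Φ w).subtype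
      exact hbindZ
    rw [hcard2, Set.toFinset_card]
    exact hcind.fintype_card_le_finrank


namespace PosSys



open scoped Classical

variable {n : ℕ} {Φ : Set (V n)}

/-- The positive roots w.r.t. a generic functional `⟪x, ·⟫`. -/
noncomputable def Phip (hΦ : IsCrystalRootSystem Φ) (x : V n) : Finset (V n) :=
  hΦ.finite.toFinset.filter (fun r => 0 < ⟪x, r⟫)

lemma mem_Phip {hΦ : IsCrystalRootSystem Φ} {x r : V n} :
    r ∈ Phip hΦ x ↔ r ∈ Φ ∧ 0 < ⟪x, r⟫ := by
  simp [Phip]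

/-- The simple (indecomposable) positive roots. -/
noncomputable def DD (hΦ : IsCrystalRootSystem Φ) (x : V n) : Finset (V n) :=
  (Phip hΦ x).filter (fun r => ¬ ∃ p ∈ Phip hΦ x, ∃ q ∈ Phip hΦ x, r = p + q)

lemma DD_subset (hΦ : IsCrystalRootSystem Φ) (x : V n) : DD hΦ x ⊆ Phip hΦ x :=
  Finset.filter_subset _ _

/-- measure for strong induction on the value of `⟪x, ·⟫` over positive roots. -/
noncomputable def mu (hΦ : IsCrystalRootSystem Φ) (x : V n) (r : V n) : ℕ :=
  ((Phip hΦ x).filter (fun q => ⟪x, q⟫ < ⟪x, r⟫)).card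

lemma mu_lt {hΦ : IsCrystalRootSystem Φ} {x r' r : V n} (h1 : r' ∈ Phip hΦ x)
    (h2 : ⟪x, r'⟫ < ⟪x, r⟫) : mu hΦ x r' < mu hΦ x r := by
  apply Finset.card_lt_card
  rw [Finset.ssubset_iff_of_subset]
  · refine ⟨r', Finset.mem_filter.mpr ⟨h1, h2⟩, fun hmem => ?_⟩
    exact absurd (Finset.mem_filter.mp hmem).2 (lt_irrefl _)
  · intro q hq
    rw [Finset.mem_filter] at hq ⊢
    exact ⟨hq.1, lt_trans hq.2 h2⟩

/-- Every positive root is a nonnegative combination of simple roots. -/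
lemma decomp (hΦ : IsCrystalRootSystem Φ) (x : V n) : ∀ (k : ℕ) (r : V n), r ∈ Phip hΦ x →
    mu hΦ x r ≤ k →
    ∃ c : V n → ℝ, (∀ v, 0 ≤ c v) ∧ r = ∑ d ∈ DD hΦ x, c d • d := by
  intro k
  induction k with
  | zero =>
    intro r hr hμ
    by_cases hd : r ∈ DD hΦ x
    · refine ⟨fun v => if v = r then 1 else 0, fun v => by positivity, ?_⟩
      simp only [ite_smul, one_smul, zero_smul]
      rw [Finset.sum_ite_eq' (DD hΦ x) r (fun b => b)]
      simp [hd]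
    · exfalso
      rw [DD, Finset.mem_filter, not_and] at hd
      have := hd hr
      rw [not_not] at this
      obtain ⟨p, hp, q, hq, rfl⟩ := this
      have hfp : 0 < ⟪x, p⟫ := (mem_Phip.mp hp).2
      have hfq : 0 < ⟪x, q⟫ := (mem_Phip.mp hq).2
      have : ⟪x, p⟫ < ⟪x, p + q⟫ := by rw [inner_add_right]; linarith
      have := mu_lt hp this
      omega
  | succ k ih =>
    intro r hr hμ
    by_cases hd : r ∈ DD hΦ x
    · refine ⟨fun v => if v = r then 1 else 0, fun v => by positivity, ?_⟩
      simp only [ite_smul, one_smul, zero_smul]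
      rw [Finset.sum_ite_eq' (DD hΦ x) r (fun b => b)]
      simp [hd]
    · rw [DD, Finset.mem_filter, not_and] at hd
      have := hd hr
      rw [not_not] at this
      obtain ⟨p, hp, q, hq, rfl⟩ := this
      have hfp : 0 < ⟪x, p⟫ := (mem_Phip.mp hp).2
      have hfq : 0 < ⟪x, q⟫ := (mem_Phip.mp hq).2
      have hple : ⟪x, p⟫ < ⟪x, p + q⟫ := by rw [inner_add_right]; linarith
      have hqle : ⟪x, q⟫ < ⟪x, p + q⟫ := by rw [inner_add_right]; linarith
      have hμp := mu_lt hp hple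
      have hμq := mu_lt hq hqle
      obtain ⟨cp, hcp, hcpr⟩ := ih p hp (by omega)
      obtain ⟨cq, hcq, hcqr⟩ := ih q hq (by omega)
      refine ⟨fun v => cp v + cq v, fun v => add_nonneg (hcp v) (hcq v), ?_⟩
      conv_lhs => rw [hcpr, hcqr]
      rw [← Finset.sum_add_distrib]
      congr 1
      funext d
      rw [add_smul]

/-- distinct simple roots have nonpositive inner products. -/
lemma DD_inner_nonpos (hΦ : IsCrystalRootSystem Φ) (x : V n) (hx : ∀ r ∈ Φ, ⟪x, r⟫ ≠ 0)
    {α β : V n} (hα : α ∈ DD hΦ x) (hβ : β ∈ DD hΦ x) (hne : α ≠ β) :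
    ⟪α, β⟫ ≤ 0 := by
  by_contra hpos
  push_neg at hpos
  have hαΦ := (mem_Phip.mp (DD_subset hΦ x hα)).1
  have hβΦ := (mem_Phip.mp (DD_subset hΦ x hβ)).1
  have hsub : α - β ∈ Φ := crystal_sub_mem hΦ hαΦ hβΦ hpos hne
  have hfs : ⟪x, α - β⟫ ≠ 0 := hx _ hsub
  rcases lt_or_gt_of_ne hfs with hneg | hpos'
  · have hba : β - α ∈ Φ := by
      have := root_neg_mem hΦ hsub
      rwa [neg_sub] at this
    have hfba : 0 < ⟪x, β - α⟫ := by
      rw [inner_sub_right] at hneg ⊢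
      linarith
    have hmem : β - α ∈ Phip hΦ x := mem_Phip.mpr ⟨hba, hfba⟩
    have := (Finset.mem_filter.mp hβ).2
    exact this ⟨β - α, hmem, α, DD_subset hΦ x hα, by abel⟩
  · have hmem : α - β ∈ Phip hΦ x := mem_Phip.mpr ⟨hsub, hpos'⟩
    have := (Finset.mem_filter.mp hα).2
    exact this ⟨α - β, hmem, β, DD_subset hΦ x hβ, by abel⟩

/-- "linear independence" of the simple roots, in coefficient form. -/
lemma DD_coeffs_zero (hΦ : IsCrystalRootSystem Φ) (x : V n) (hx : ∀ r ∈ Φ, ⟪x, r⟫ ≠ 0)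
    (h : V n → ℝ) (hsum : ∑ d ∈ DD hΦ x, h d • d = 0) :
    ∀ d ∈ DD hΦ x, h d = 0 := by
  set D := DD hΦ x with hD
  set P := D.filter (fun d => 0 < h d) with hP
  set N := D.filter (fun d => h d < 0) with hN
  have hsplit : ∑ d ∈ P, h d • d + ∑ d ∈ D.filter (fun d => ¬ 0 < h d), h d • d = 0 := by
    rw [Finset.sum_filter_add_sum_filter_not]; exact hsum
  have hrest : ∑ d ∈ D.filter (fun d => ¬ 0 < h d), h d • d = ∑ d ∈ N, h d • d := by
    rw [← Finset.sum_filter_add_sum_filter_not (D.filter (fun d => ¬ 0 < h d))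
      (fun d => h d < 0)]
    have h1 : (D.filter (fun d => ¬ 0 < h d)).filter (fun d => h d < 0) = N := by
      rw [Finset.filter_filter, hN]
      congr 1
      funext d
      simp only [eq_iff_iff]
      constructor
      · exact fun h => h.2
      · intro h; exact ⟨by linarith, h⟩
    have h2 : ∑ d ∈ (D.filter (fun d => ¬ 0 < h d)).filter (fun d => ¬ h d < 0), h d • d = 0 := by
      apply Finset.sum_eq_zero
      intro d hd
      simp only [Finset.mem_filter] at hd
      have : h d = 0 := by have := hd.1.2; have := hd.2; linarith
      rw [this, zero_smul]
    rw [h1, h2, add_zero]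
  have hPN : ∑ d ∈ P, h d • d + ∑ d ∈ N, h d • d = 0 := by rw [← hrest]; exact hsplit
  have hv : ∑ d ∈ P, h d • d = ∑ d ∈ N, (-(h d)) • d := by
    have hneg : ∑ d ∈ N, (-(h d)) • d = - ∑ d ∈ N, h d • d := by
      rw [← Finset.sum_neg_distrib]
      congr 1
      funext d
      rw [neg_smul]
    rw [hneg]
    exact eq_neg_of_add_eq_zero_left hPN
  have hvv : ⟪∑ d ∈ P, h d • d, ∑ d ∈ P, h d • d⟫ ≤ 0 := by
    nth_rewrite 2 [hv]
    rw [sum_inner]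
    apply Finset.sum_nonpos
    intro p hp
    rw [real_inner_smul_left, inner_sum]
    have hp1 : 0 < h p := (Finset.mem_filter.mp hp).2
    have hpD : p ∈ D := (Finset.mem_filter.mp hp).1
    apply mul_nonpos_of_nonneg_of_nonpos hp1.le
    apply Finset.sum_nonpos
    intro q hq
    rw [real_inner_smul_right]
    have hq1 : h q < 0 := (Finset.mem_filter.mp hq).2
    have hqD : q ∈ D := (Finset.mem_filter.mp hq).1
    have hpq : p ≠ q := fun h' => by rw [h'] at hp1; linarith
    have := DD_inner_nonpos hΦ x hx hpD hqD hpq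
    nlinarith
  have hv0 : ∑ d ∈ P, h d • d = 0 := real_inner_self_nonpos.mp hvv
  have hfd : ∀ d ∈ D, 0 < ⟪x, d⟫ := fun d hd => (mem_Phip.mp (DD_subset hΦ x hd)).2
  have hPempty : P = ∅ := by
    by_contra hne
    have hnonempty := Finset.nonempty_of_ne_empty hne
    have h0 : (0:ℝ) < ⟪x, ∑ d ∈ P, h d • d⟫ := by
      rw [inner_sum]
      apply Finset.sum_pos
      · intro d hd
        rw [real_inner_smul_right]
        have h1 : 0 < h d := (Finset.mem_filter.mp hd).2
        have h2 : 0 < ⟪x, d⟫ := hfd d (Finset.mem_filter.mp hd).1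
        positivity
      · exact hnonempty
    rw [hv0, inner_zero_right] at h0
    linarith
  have hNempty : N = ∅ := by
    by_contra hne
    have hnonempty := Finset.nonempty_of_ne_empty hne
    have hNv : ∑ d ∈ N, (-(h d)) • d = 0 := by rw [← hv, hv0]
    have h0 : (0:ℝ) < ⟪x, ∑ d ∈ N, (-(h d)) • d⟫ := by
      rw [inner_sum]
      apply Finset.sum_pos
      · intro d hd
        rw [real_inner_smul_right]
        have h1 : h d < 0 := (Finset.mem_filter.mp hd).2
        have h2 : 0 < ⟪x, d⟫ := hfd d (Finset.mem_filter.mp hd).1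
        have : 0 < -(h d) := by linarith
        positivity
      · exact hnonempty
    rw [hNv, inner_zero_right] at h0
    linarith
  intro d hd
  have hdP : d ∉ P := by rw [hPempty]; exact Finset.notMem_empty d
  have hdN : d ∉ N := by rw [hNempty]; exact Finset.notMem_empty d
  rw [hP, Finset.mem_filter] at hdP
  rw [hN, Finset.mem_filter] at hdN
  push_neg at hdP hdN
  have h1 := hdP hd
  have h2 := hdN hd
  linarith

/-- the key property of simple reflections: they keep the other positive roots positive. -/
lemma sE_DD_pos (hΦ : IsCrystalRootSystem Φ) (x : V n) (hx : ∀ r ∈ Φ, ⟪x, r⟫ ≠ 0)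
    {α r : V n} (hα : α ∈ DD hΦ x) (hr : r ∈ Phip hΦ x) (hprop : ∀ c : ℝ, r ≠ c • α) :
    sE α r ∈ Phip hΦ x := by
  have hαΦ := (mem_Phip.mp (DD_subset hΦ x hα)).1
  have hrΦ := (mem_Phip.mp hr).1
  have hmem : sE α r ∈ Φ := by
    exact sE_root_mem hΦ hαΦ hrΦ
  have hne : ⟪x, sE α r⟫ ≠ 0 := hx _ hmem
  rcases lt_or_gt_of_ne hne with hneg | hpos
  · exfalso
    -- t := -(sE α r) is positive; r + t = nn • α
    set nn : ℝ := 2 * ⟪r, α⟫ / ⟪α, α⟫ with hnn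
    set t : V n := -(sE α r) with ht
    have htΦ : t ∈ Φ := root_neg_mem hΦ hmem
    have htpos : 0 < ⟪x, t⟫ := by
      rw [ht, inner_neg_right]
      linarith
    have htP : t ∈ Phip hΦ x := mem_Phip.mpr ⟨htΦ, htpos⟩
    have hrt : r + t = nn • α := by
      rw [ht, sE_apply, hnn]
      abel
    obtain ⟨cr, hcr, hcrr⟩ := decomp hΦ x (mu hΦ x r) r hr le_rfl
    obtain ⟨ct, hct, hctr⟩ := decomp hΦ x (mu hΦ x t) t htP le_rfl
    set hfun : V n → ℝ := fun d => cr d + ct d - (if d = α then nn else 0) with hhfun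
    have hsum0 : ∑ d ∈ DD hΦ x, hfun d • d = 0 := by
      have e1 : ∑ d ∈ DD hΦ x, hfun d • d
          = (∑ d ∈ DD hΦ x, cr d • d) + (∑ d ∈ DD hΦ x, ct d • d)
            - ∑ d ∈ DD hΦ x, (if d = α then nn else 0) • d := by
        rw [← Finset.sum_add_distrib, ← Finset.sum_sub_distrib]
        congr 1
        funext d
        rw [hhfun]
        simp only
        rw [sub_smul, add_smul]
      have e2 : ∑ d ∈ DD hΦ x, (if d = α then nn else 0) • d = nn • α := by
        simp only [ite_smul, zero_smul]
        rw [Finset.sum_ite_eq' (DD hΦ x) α (fun b => nn • b)]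
        simp [hα]
      rw [e1, e2, ← hcrr, ← hctr, hrt]
      abel
    have hzero := DD_coeffs_zero hΦ x hx hfun hsum0
    have hr_eq : r = cr α • α := by
      rw [hcrr]
      apply Finset.sum_eq_single_of_mem α hα
      intro d hd hdne
      have := hzero d hd
      rw [hhfun] at this
      simp only at this
      rw [if_neg hdne] at this
      have h1 := hcr d
      have h2 := hct d
      have hcrd : cr d = 0 := by linarith
      rw [hcrd, zero_smul]
    exact hprop (cr α) hr_eq
  · exact mem_Phip.mpr ⟨hmem, hpos⟩


/-- The subgroup generated by the simple reflections. -/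
noncomputable def Wd (hΦ : IsCrystalRootSystem Φ) (x : V n) : Subgroup (V n ≃ₗ[ℝ] V n) :=
  Subgroup.closure {g | ∃ d ∈ DD hΦ x, g = sE d}

lemma sE_mem_Wd_of_pos (hΦ : IsCrystalRootSystem Φ) (x : V n) (hx : ∀ r ∈ Φ, ⟪x, r⟫ ≠ 0) :
    ∀ (k : ℕ) (r : V n), r ∈ Phip hΦ x → mu hΦ x r ≤ k → sE r ∈ Wd hΦ x := by
  intro k
  induction k with
  | zero =>
    intro r hr hμ
    by_cases hprop : ∃ α ∈ DD hΦ x, ∃ c : ℝ, r = c • α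
    · obtain ⟨α, hα, c, rfl⟩ := hprop
      have hc : c ≠ 0 := by
        intro h0
        exact hΦ.ne_zero _ (mem_Phip.mp hr).1 (by rw [h0, zero_smul])
      rw [sE_smul hc]
      exact Subgroup.subset_closure ⟨α, hα, rfl⟩
    · exfalso
      -- there is a simple root with positive inner product with r; reflection decreases mu,
      -- impossible at mu ≤ 0
      push_neg at hprop
      have hrΦ := (mem_Phip.mp hr).1
      have hrne : r ≠ 0 := hΦ.ne_zero r hrΦ
      obtain ⟨c, hc, hcr⟩ := decomp hΦ x (mu hΦ x r) r hr le_rfl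
      have hrr : 0 < ⟪r, r⟫ := ipos hrne
      have hex : ∃ d ∈ DD hΦ x, 0 < c d * ⟪d, r⟫ := by
        by_contra hno
        push_neg at hno
        have : ⟪r, r⟫ ≤ 0 := by
          nth_rewrite 1 [hcr]
          rw [sum_inner]
          apply Finset.sum_nonpos
          intro d hd
          rw [real_inner_smul_left]
          exact hno d hd
        linarith
      obtain ⟨α, hα, hpos⟩ := hex
      have hinner : 0 < ⟪α, r⟫ := by
        rcases le_or_gt ⟪α, r⟫ 0 with h | h
        · exfalso
          have := mul_nonpos_of_nonneg_of_nonpos (hc α) h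
          linarith
        · exact h
      have hr' : sE α r ∈ Phip hΦ x := sE_DD_pos hΦ x hx hα hr (hprop α hα)
      have hαpos : 0 < ⟪x, α⟫ := (mem_Phip.mp (DD_subset hΦ x hα)).2
      have hαne : α ≠ 0 := hΦ.ne_zero _ (mem_Phip.mp (DD_subset hΦ x hα)).1
      have hflt : ⟪x, sE α r⟫ < ⟪x, r⟫ := by
        rw [sE_apply, inner_sub_right, real_inner_smul_right]
        have h1 : 0 < 2 * ⟪r, α⟫ / ⟪α, α⟫ := by
          have := ipos hαne
          rw [← real_inner_comm r α]
          positivity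
        nlinarith
      have := mu_lt hr' hflt
      omega
  | succ k ih =>
    intro r hr hμ
    by_cases hprop : ∃ α ∈ DD hΦ x, ∃ c : ℝ, r = c • α
    · obtain ⟨α, hα, c, rfl⟩ := hprop
      have hc : c ≠ 0 := by
        intro h0
        exact hΦ.ne_zero _ (mem_Phip.mp hr).1 (by rw [h0, zero_smul])
      rw [sE_smul hc]
      exact Subgroup.subset_closure ⟨α, hα, rfl⟩
    · push_neg at hprop
      have hrΦ := (mem_Phip.mp hr).1
      have hrne : r ≠ 0 := hΦ.ne_zero r hrΦ
      obtain ⟨c, hc, hcr⟩ := decomp hΦ x (mu hΦ x r) r hr le_rfl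
      have hrr : 0 < ⟪r, r⟫ := ipos hrne
      have hex : ∃ d ∈ DD hΦ x, 0 < c d * ⟪d, r⟫ := by
        by_contra hno
        push_neg at hno
        have : ⟪r, r⟫ ≤ 0 := by
          nth_rewrite 1 [hcr]
          rw [sum_inner]
          apply Finset.sum_nonpos
          intro d hd
          rw [real_inner_smul_left]
          exact hno d hd
        linarith
      obtain ⟨α, hα, hpos⟩ := hex
      have hinner : 0 < ⟪α, r⟫ := by
        rcases le_or_gt ⟪α, r⟫ 0 with h | h
        · exfalso
          have := mul_nonpos_of_nonneg_of_nonpos (hc α) h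
          linarith
        · exact h
      have hr' : sE α r ∈ Phip hΦ x := sE_DD_pos hΦ x hx hα hr (hprop α hα)
      have hαpos : 0 < ⟪x, α⟫ := (mem_Phip.mp (DD_subset hΦ x hα)).2
      have hαne : α ≠ 0 := hΦ.ne_zero _ (mem_Phip.mp (DD_subset hΦ x hα)).1
      have hflt : ⟪x, sE α r⟫ < ⟪x, r⟫ := by
        rw [sE_apply, inner_sub_right, real_inner_smul_right]
        have h1 : 0 < 2 * ⟪r, α⟫ / ⟪α, α⟫ := by
          have := ipos hαne
          rw [← real_inner_comm r α]
          positivity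
      
        nlinarith
      have hμ' := mu_lt hr' hflt
      have hIH := ih (sE α r) hr' (by omega)
      have hkey : sE r = sE α * sE (sE α r) * sE α := by
        have h1 : sE α * sE (sE α r) * (sE α)⁻¹ = sE (sE α (sE α r)) :=
          conj_sE (orth_sE α) (sE α r)
        rw [sE_invol] at h1
        rw [← h1, sE_inv]
      rw [hkey]
      have hgen : sE α ∈ Wd hΦ x := Subgroup.subset_closure ⟨α, hα, rfl⟩
      exact mul_mem (mul_mem hgen hIH) hgen

lemma sE_mem_Wd (hΦ : IsCrystalRootSystem Φ) (x : V n) (hx : ∀ r ∈ Φ, ⟪x, r⟫ ≠ 0)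
    {r : V n} (hr : r ∈ Φ) : sE r ∈ Wd hΦ x := by
  rcases lt_or_gt_of_ne (hx r hr) with hneg | hpos
  · have hmem : -r ∈ Phip hΦ x := mem_Phip.mpr ⟨root_neg_mem hΦ hr, by
      rw [inner_neg_right]; linarith⟩
    have := sE_mem_Wd_of_pos hΦ x hx (mu hΦ x (-r)) (-r) hmem le_rfl
    rwa [sE_neg] at this
  · exact sE_mem_Wd_of_pos hΦ x hx (mu hΦ x r) r (mem_Phip.mpr ⟨hr, hpos⟩) le_rfl

lemma weyl_le_Wd (hΦ : IsCrystalRootSystem Φ) (x : V n) (hx : ∀ r ∈ Φ, ⟪x, r⟫ ≠ 0) :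
    weylGroup Φ ≤ Wd hΦ x := by
  rw [weylGroup, Subgroup.closure_le]
  rintro g ⟨β, hβ, hrefl⟩
  rw [eq_sE' hrefl]
  exact sE_mem_Wd hΦ x hx hβ

lemma Wd_word_mem_weyl (hΦ : IsCrystalRootSystem Φ) (x : V n)
    {l : List (V n ≃ₗ[ℝ] V n)} (hl : ∀ g ∈ l, ∃ d ∈ DD hΦ x, g = sE d) :
    l.prod ∈ weylGroup Φ := by
  apply Subgroup.list_prod_mem
  intro g hg
  obtain ⟨d, hd, rfl⟩ := hl g hg
  have hdΦ : d ∈ Φ := (mem_Phip.mp (DD_subset hΦ x hd)).1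
  exact Subgroup.subset_closure ⟨d, hdΦ, isReflAlong_sE d⟩

/-- Scanning lemma: a word ending in the simple reflection `sE α` either sends `α` negative,
or can be shortened by two. -/
lemma scan (hΦ : IsCrystalRootSystem Φ) (x : V n) (hx : ∀ r ∈ Φ, ⟪x, r⟫ ≠ 0) :
    ∀ (mid : List (V n ≃ₗ[ℝ] V n)), (∀ g ∈ mid, ∃ d ∈ DD hΦ x, g = sE d) →
    ∀ α ∈ DD hΦ x, ⟪x, (mid ++ [sE α]).prod α⟫ < 0 ∨
      ∃ l' : List (V n ≃ₗ[ℝ] V n), (∀ g ∈ l', ∃ d ∈ DD hΦ x, g = sE d) ∧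
        l'.length + 2 = mid.length + 1 ∧ l'.prod = (mid ++ [sE α]).prod := by
  intro mid
  induction mid with
  | nil =>
    intro _ α hα
    left
    have hαΦ : α ∈ Φ := (mem_Phip.mp (DD_subset hΦ x hα)).1
    have hαne : α ≠ 0 := hΦ.ne_zero _ hαΦ
    have hαpos : 0 < ⟪x, α⟫ := (mem_Phip.mp (DD_subset hΦ x hα)).2
    simp only [List.nil_append, List.prod_cons, List.prod_nil, mul_one]
    rw [sE_apply_self hαne, inner_neg_right]
    linarith
  | cons g1 mid' ih =>
    intro hword α hα
    obtain ⟨δ, hδ, hg1⟩ := hword g1 List.mem_cons_self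
    have hword' : ∀ g ∈ mid', ∃ d ∈ DD hΦ x, g = sE d :=
      fun g hg => hword g (List.mem_cons_of_mem _ hg)
    have hαΦ : α ∈ Φ := (mem_Phip.mp (DD_subset hΦ x hα)).1
    rcases ih hword' α hα with hneg | ⟨l'', hw'', hlen'', hprod''⟩
    · -- the prefix word already sends α to a negative root
      set u : V n ≃ₗ[ℝ] V n := (mid' ++ [sE α]).prod with hu
      set γ : V n := u α with hγ
      have huW : u ∈ weylGroup Φ := by
        apply Wd_word_mem_weyl hΦ x
        intro g hg
        rcases List.mem_append.mp hg with h | h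
        · exact hword' g h
        · rw [List.mem_singleton.mp h]; exact ⟨α, hα, rfl⟩
      have hγΦ : γ ∈ Φ := weyl_maps_root hΦ huW α hαΦ
      have hγne : γ ≠ 0 := hΦ.ne_zero _ hγΦ
      have hmγ : -γ ∈ Phip hΦ x := mem_Phip.mpr ⟨root_neg_mem hΦ hγΦ, by
        rw [inner_neg_right]; linarith⟩
      have htot : ((g1 :: mid') ++ [sE α]).prod = g1 * u := by
        rw [List.cons_append, List.prod_cons]
      by_cases hprop : ∃ c : ℝ, -γ = c • δ
      · -- shorten by two
        right
        obtain ⟨c, hcγ⟩ := hprop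
        have hc : c ≠ 0 := by
          intro h0
          rw [h0, zero_smul] at hcγ
          exact hγne (by simpa using congrArg Neg.neg hcγ)
        have hsEγ : sE γ = sE δ := by
          rw [← sE_neg γ, hcγ, sE_smul hc]
        have hconj : sE γ = u * sE α * u⁻¹ := by
          rw [hγ, ← conj_sE (orth_of_mem_weyl huW) α]
        have hg1u : g1 * u = mid'.prod := by
          rw [hg1, ← hsEγ, hconj]
          have : u * sE α * u⁻¹ * u = u * sE α := by group
          rw [this, hu, List.prod_append, List.prod_singleton, mul_assoc, sE_mul_self, mul_one]
        refine ⟨mid', hword', ?_, ?_⟩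
        · simp [List.length_cons]
        · rw [htot, hg1u]
      · push_neg at hprop
        left
        have hres : sE δ (-γ) ∈ Phip hΦ x := sE_DD_pos hΦ x hx hδ hmγ hprop
        have hres' : 0 < ⟪x, sE δ (-γ)⟫ := (mem_Phip.mp hres).2
        have hmap : sE δ (-γ) = -(sE δ γ) := map_neg _ γ
        rw [htot, mul_apply, ← hγ, hg1]
        rw [hmap, inner_neg_right] at hres'
        linarith
    · right
      refine ⟨g1 :: l'', ?_, ?_, ?_⟩
      · intro g hg
        rcases List.mem_cons.mp hg with h | h
        · exact h ▸ ⟨δ, hδ, hg1⟩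
        · exact hw'' g h
      · simp only [List.length_cons]
        omega
      · rw [List.cons_append, List.prod_cons, List.prod_cons, hprod'']

lemma exists_word_of_mem_closure {G : Type*} [Group G] {s : Set G}
    (hinv : ∀ g ∈ s, g⁻¹ ∈ s) {x : G} (hx : x ∈ Subgroup.closure s) :
    ∃ l : List G, (∀ y ∈ l, y ∈ s) ∧ l.prod = x := by
  have hx' : x ∈ Submonoid.closure (s ∪ s⁻¹) := by
    rw [← Subgroup.closure_toSubmonoid]
    exact hx
  obtain ⟨l, hl, rfl⟩ := Submonoid.exists_list_of_mem_closure hx'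
  refine ⟨l, fun y hy => ?_, rfl⟩
  rcases hl y hy with h | h
  · exact h
  · have : y⁻¹ ∈ s := Set.mem_inv.mp h
    have := hinv _ this
    rwa [inv_inv] at this

/-- Rigidity: an element of the Weyl group fixing a generic point is the identity. -/
lemma rigidity (hΦ : IsCrystalRootSystem Φ) (x : V n) (hx : ∀ r ∈ Φ, ⟪x, r⟫ ≠ 0)
    {w : V n ≃ₗ[ℝ] V n} (hw : w ∈ weylGroup Φ) (hfix : w x = x) : w = 1 := by
  by_contra hne
  have hwWd : w ∈ Wd hΦ x := weyl_le_Wd hΦ x hx hw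
  -- get a word for w in the simple reflections
  have hinv : ∀ g ∈ {g : V n ≃ₗ[ℝ] V n | ∃ d ∈ DD hΦ x, g = sE d},
      g⁻¹ ∈ {g : V n ≃ₗ[ℝ] V n | ∃ d ∈ DD hΦ x, g = sE d} := by
    rintro g ⟨d, hd, rfl⟩
    exact ⟨d, hd, sE_inv d⟩
  obtain ⟨l0, hl0word, hl0prod⟩ := exists_word_of_mem_closure hinv hwWd
  set K : Set ℕ := {k | ∃ l : List (V n ≃ₗ[ℝ] V n),
    (∀ g ∈ l, ∃ d ∈ DD hΦ x, g = sE d) ∧ l.length = k ∧ l.prod = w} with hK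
  have hKne : K.Nonempty := ⟨l0.length, l0, hl0word, rfl, hl0prod⟩
  obtain ⟨l, hlword, hllen, hlprod⟩ := Nat.sInf_mem hKne
  rcases List.eq_nil_or_concat l with rfl | ⟨mid, glast, rfl⟩
  · exact hne (by rw [← hlprod, List.prod_nil])
  rw [List.concat_eq_append] at *
  obtain ⟨α, hα, hglast⟩ := hlword glast (by simp)
  have hwordmid : ∀ g ∈ mid, ∃ d ∈ DD hΦ x, g = sE d := by
    intro g hg
    exact hlword g (by simp [hg])
  rcases scan hΦ x hx mid hwordmid α hα with hneg | ⟨l', hw', hlen', hprod'⟩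
  · -- contradiction with w preserving ⟪x,·⟫
    rw [← hglast, hlprod] at hneg
    have hαpos : 0 < ⟪x, α⟫ := (mem_Phip.mp (DD_subset hΦ x hα)).2
    have horth := orth_of_mem_weyl hw
    have : ⟪x, w α⟫ = ⟪x, α⟫ := by
      conv_lhs => rw [← hfix]
      exact horth x α
    rw [this] at hneg
    linarith
  · -- contradiction with minimality
    rw [← hglast, hlprod] at hprod'
    have hmem : l'.length ∈ K := ⟨l', hw', rfl, hprod'⟩
    have hle := Nat.sInf_le hmem
    rw [← hllen] at *
    simp only [List.length_append, List.length_singleton] at hle hllen hlen'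
    omega

/-- Lemma E: a nontrivial Weyl group element has a root in its move-set. -/
lemma exists_root_mem_movSet (hΦ : IsCrystalRootSystem Φ) {w : V n ≃ₗ[ℝ] V n}
    (hw : w ∈ weylGroup Φ) (hne : w ≠ 1) : ∃ β ∈ Φ, β ∈ movSet w := by
  by_contra hcon
  push_neg at hcon
  set A := fixSub w with hA
  have horth := orth_of_mem_weyl hw
  have hmov := movSet_orthogonal horth
  -- no root is orthogonal to all of A
  have hnr : ∀ r ∈ Φ, ∃ v ∈ A, ⟪v, r⟫ ≠ 0 := by
    intro r hr
    by_contra hno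
    push_neg at hno
    have : r ∈ movSet w := by
      rw [hmov, Submodule.mem_orthogonal]
      exact fun u hu => hno u hu
    exact hcon r hr this
  -- generic point of A
  have : ∃ xA : ↥A, ∀ r : {r // r ∈ Φ},
      xA ∉ LinearMap.ker (((innerSL ℝ (r : V n)).toLinearMap).comp A.subtype) := by
    by_contra hcover
    push_neg at hcover
    have : Finite {r // r ∈ Φ} := hΦ.finite.to_subtype
    have hcov : ⋃ r : {r // r ∈ Φ},
        ((LinearMap.ker (((innerSL ℝ (r : V n)).toLinearMap).comp A.subtype) : Submodule ℝ ↥A) :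
          Set ↥A) = Set.univ := by
      rw [Set.eq_univ_iff_forall]
      intro xA
      obtain ⟨r, hrk⟩ := hcover xA
      exact Set.mem_iUnion.mpr ⟨r, hrk⟩
    obtain ⟨r, hrtop⟩ := Subspace.exists_eq_top_of_iUnion_eq_univ hcov
    obtain ⟨v, hvA, hvr⟩ := hnr r r.2
    have : (⟨v, hvA⟩ : ↥A) ∈ LinearMap.ker (((innerSL ℝ (r : V n)).toLinearMap).comp A.subtype) := by
      rw [hrtop]; trivial
    rw [LinearMap.mem_ker] at this
    simp only [LinearMap.comp_apply, Submodule.coe_subtype, ContinuousLinearMap.coe_coe,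
      innerSL_apply_apply] at this
    exact hvr (by rw [real_inner_comm]; exact this)
  obtain ⟨xA, hxA⟩ := this
  set x : V n := (xA : V n) with hxdef
  have hx : ∀ r ∈ Φ, ⟪x, r⟫ ≠ 0 := by
    intro r hr
    have := hxA ⟨r, hr⟩
    rw [LinearMap.mem_ker] at this
    simp only [LinearMap.comp_apply, Submodule.coe_subtype, ContinuousLinearMap.coe_coe,
      innerSL_apply_apply] at this
    intro h0
    exact this (by rw [real_inner_comm]; exact h0)
  have hfix : w x = x := mem_fixSub.mp xA.2
  exact hne (rigidity hΦ x hx hw hfix)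

/-- Carter's theorem, upper bound: `w` is a product of `dim Mov(w)` root reflections. -/
lemma exists_word_movSet (hΦ : IsCrystalRootSystem Φ) :
    ∀ (k : ℕ) (w : V n ≃ₗ[ℝ] V n), w ∈ weylGroup Φ → Module.finrank ℝ (movSet w) ≤ k →
    ∃ l : List (V n ≃ₗ[ℝ] V n), (∀ g ∈ l, ∃ β ∈ Φ, IsReflAlong β g) ∧
      l.length = Module.finrank ℝ (movSet w) ∧ l.prod = w := by
  intro k
  induction k with
  | zero =>
    intro w hw hk
    have h0 : Module.finrank ℝ (movSet w) = 0 := Nat.le_zero.mp hk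
    have : movSet w = ⊥ := Submodule.finrank_eq_zero.mp h0
    have hw1 : w = 1 := movSet_eq_bot_iff.mp this
    exact ⟨[], by simp, by simp [h0], by rw [List.prod_nil, hw1]⟩
  | succ k ih =>
    intro w hw hk
    by_cases hw1 : w = 1
    · subst hw1
      have : movSet (1 : V n ≃ₗ[ℝ] V n) = ⊥ := movSet_eq_bot_iff.mpr rfl
      refine ⟨[], by simp, ?_, by simp⟩
      rw [this]
      simp [finrank_bot]
    · obtain ⟨β, hβΦ, hβmov⟩ := exists_root_mem_movSet hΦ hw hw1
      have hβne : β ≠ 0 := hΦ.ne_zero β hβΦ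
      have horth := orth_of_mem_weyl hw
      have hdrop := dim_drop hβne horth hβmov
      have hsEW : sE β ∈ weylGroup Φ := Subgroup.subset_closure ⟨β, hβΦ, isReflAlong_sE β⟩
      have hw'W : sE β * w ∈ weylGroup Φ := mul_mem hsEW hw
      obtain ⟨l', hl'word, hl'len, hl'prod⟩ := ih (sE β * w) hw'W (by omega)
      refine ⟨sE β :: l', ?_, ?_, ?_⟩
      · intro g hg
        rcases List.mem_cons.mp hg with h | h
        · exact h ▸ ⟨β, hβΦ, isReflAlong_sE β⟩
        · exact hl'word g h
      · simp only [List.length_cons, hl'len]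
        omega
      · rw [List.prod_cons, hl'prod, ← mul_assoc, sE_mul_self, one_mul]

/-- Carter's theorem. -/
theorem reflLen_eq_finrank_movSet (hΦ : IsCrystalRootSystem Φ) {w : V n ≃ₗ[ℝ] V n}
    (hw : w ∈ weylGroup Φ) : reflLen Φ w = Module.finrank ℝ (movSet w) := by
  obtain ⟨l, hlword, hllen, hlprod⟩ :=
    exists_word_movSet hΦ (Module.finrank ℝ (movSet w)) w hw le_rfl
  have hmem : Module.finrank ℝ (movSet w) ∈ {k | ∃ l : List (V n ≃ₗ[ℝ] V n), l.length = k ∧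
      (∀ g ∈ l, ∃ β ∈ Φ, IsReflAlong β g) ∧ l.prod = w} := ⟨l, hllen, hlword, hlprod⟩
  refine le_antisymm (Nat.sInf_le hmem) (le_csInf ⟨_, hmem⟩ ?_)
  rintro k ⟨l', hl'len, hl'word, hl'prod⟩
  have := finrank_movSet_le_length hΦ l' hl'word
  rw [hl'prod, hl'len] at this
  exact this


end PosSys
end Carter

/-- For every element `w` of the Weyl group of a crystallographic root system `Φ`, the
`ℤ`-rank of the mod-set `Mod(w) = (w − Id)R^∨` equals the reflection length of `w`. -/
theorem finrank_modSet_eq_reflLen {n : ℕ} (Φ : Set (V n)) (hΦ : IsCrystalRootSystem Φ)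
    (w : V n ≃ₗ[ℝ] V n) (hw : w ∈ weylGroup Φ) :
    Module.finrank ℤ (modSet Φ w) = reflLen Φ w := by
  exact (Carter.finrank_modSet_eq hΦ hw).trans
    (Carter.PosSys.reflLen_eq_finrank_movSet hΦ hw).symm
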